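/- Let (G, G_•) be a filtered group of degree d (i.e. G_{d+1} = {id}). Then every cube q ∈ C^n(G_•) is entirely determined by its restriction to {v ∈ {0,1}^n : |v| ≤ d}, where |v| is the number of coordinates of v equal to 1. -/

import Mathlib

open Finset

/-- Embedding of the discrete cube `{0,1}^n` into `ℤ^n`. -/
def cubeEmb {n : ℕ} (v : Fin n → Bool) : Fin n → ℤ := fun i => if v i then 1 else 0

/-- A discrete-cube morphism: the restriction to `{0,1}^m` of an affine
homomorphism `ℤ^m → ℤ^n`. -/
def IsCubeMorphism {m n : ℕ} (φ : (Fin m → Bool) → (Fin n → Bool)) : Prop :=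
  ∃ (M : (Fin m → ℤ) →+ (Fin n → ℤ)) (t : Fin n → ℤ),
    ∀ v : Fin m → Bool, cubeEmb (φ v) = M (cubeEmb v) + t

/-- A face of `{0,1}^n` of codimension `c`: fix `c` coordinates. -/
def IsFaceOfCodim {n : ℕ} (F : Set (Fin n → Bool)) (c : ℕ) : Prop :=
  ∃ (I : Finset (Fin n)) (x : Fin n → Bool), I.card = c ∧
    F = {v : Fin n → Bool | ∀ i ∈ I, v i = x i}

/-- An `m`-face map into `{0,1}^n`: an injective cube morphism whose image is
an `m`-dimensional face. -/
def IsFaceMap {m n : ℕ} (φ : (Fin m → Bool) → (Fin n → Bool)) : Prop :=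
  IsCubeMorphism φ ∧ Function.Injective φ ∧ IsFaceOfCodim (Set.range φ) (n - m)

/-- The number of coordinates of `v` equal to `1`. -/
def weight {n : ℕ} (v : Fin n → Bool) : ℕ := (Finset.univ.filter fun i => v i = true).card

/-- A (pre)filtration on a group: a decreasing chain of subgroups with
`[G_i, G_j] ⊆ G_{i+j}`. -/
def IsGrpPrefiltration {G : Type*} [Group G] (Gf : ℕ → Subgroup G) : Prop :=
  (∀ i, Gf (i + 1) ≤ Gf i) ∧
  (∀ i j : ℕ, ∀ x ∈ Gf i, ∀ y ∈ Gf j, x⁻¹ * y⁻¹ * x * y ∈ Gf (i + j))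

open Classical in
/-- The face-group element `g^F`: equal to `g` on `F` and to the identity elsewhere. -/
noncomputable def faceEl {G : Type*} [Group G] {n : ℕ} (F : Set (Fin n → Bool)) (g : G) :
    (Fin n → Bool) → G :=
  fun v => if v ∈ F then g else 1

/-- The Host–Kra cube group `C^n(G_•)`: the subgroup of `G^{{0,1}^n}` generated by
the face groups. -/
noncomputable def hkCubes {G : Type*} [Group G] (Gf : ℕ → Subgroup G) (n : ℕ) :
    Subgroup ((Fin n → Bool) → G) :=
  Subgroup.closure { f | ∃ (c : ℕ) (F : Set (Fin n → Bool)) (g : G),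
    IsFaceOfCodim F c ∧ g ∈ Gf c ∧ f = faceEl F g }

/-- Restriction of a map on `{0,1}^{n+1}` to the lower face `{v : v_j = 0}`,
viewed as a map on `{0,1}^n`. -/
def lowerFaceRestr {X : Type*} {n : ℕ} (q : (Fin (n + 1) → Bool) → X) (j : Fin (n + 1)) :
    (Fin n → Bool) → X :=
  fun v => q (j.insertNth false v)

/-- An `(n+1)`-corner: every restriction to an `n`-face containing `0^{n+1}` is a cube. -/
def IsNSCorner {X : Type*} (C : ∀ n, ((Fin n → Bool) → X) → Prop) (n : ℕ)
    (q' : (Fin (n + 1) → Bool) → X) : Prop :=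
  ∀ j : Fin (n + 1), C n (lowerFaceRestr q' j)

/-- `q` is a completion of the corner `q'`. -/
def IsNSCompletion {X : Type*} (C : ∀ n, ((Fin n → Bool) → X) → Prop) (n : ℕ)
    (q' q : (Fin (n + 1) → Bool) → X) : Prop :=
  C (n + 1) q ∧ ∀ v : Fin (n + 1) → Bool, v ≠ (fun _ => true) → q v = q' v

/-- The nilspace axioms: composition, ergodicity and corner completion. -/
def IsNilspace {X : Type*} (C : ∀ n, ((Fin n → Bool) → X) → Prop) : Prop :=
  (∀ (m n : ℕ) (φ : (Fin m → Bool) → (Fin n → Bool)), IsCubeMorphism φ →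
      ∀ q, C n q → C m (q ∘ φ)) ∧
  (∀ q : (Fin 1 → Bool) → X, C 1 q) ∧
  (∀ n (q' : (Fin (n + 1) → Bool) → X), IsNSCorner C n q' → ∃ q, IsNSCompletion C n q' q)

/-- A `k`-step nilspace: a nilspace in which every `(k+1)`-corner has a unique
completion. -/
def IsKStepNilspace {X : Type*} (C : ∀ n, ((Fin n → Bool) → X) → Prop) (k : ℕ) : Prop :=
  IsNilspace C ∧
  ∀ q' : (Fin (k + 1) → Bool) → X, IsNSCorner C k q' → ∃! q, IsNSCompletion C k q' q

/-- The Gray-code alternating product `σ_n`. -/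
def graySigma {G : Type*} [Group G] : (n : ℕ) → ((Fin n → Bool) → G) → G
  | 0, g => g (fun i => i.elim0)
  | n + 1, g => (graySigma n (fun v => g (Fin.snoc v true)))⁻¹ *
      graySigma n (fun v => g (Fin.snoc v false))

/-- The difference operator `∂_h g (x) = g(x)⁻¹ g(xh)`. -/
def mulDiff {H G : Type*} [Group H] [Group G] (h : H) (g : H → G) : H → G :=
  fun x => (g x)⁻¹ * g (x * h)

/-- `g : H → G` is a polynomial map adapted to the filtrations `H_•, G_•`. -/
def IsPolyMap {H G : Type*} [Group H] [Group G] (Hf : ℕ → Subgroup H)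
    (Gf : ℕ → Subgroup G) (g : H → G) : Prop :=
  ∀ (n : ℕ) (d : Fin n → ℕ) (h : Fin n → H), (∀ j, h j ∈ Hf (d j)) →
    ∀ x : H, ((List.ofFn h).foldr mulDiff g) x ∈ Gf (∑ j, d j)

/-- The `k`-arrow `⟨q_0, q_1⟩_k : {0,1}^{n+k} → X`. -/
def arrowMap {X : Type*} {n k : ℕ} (q0 q1 : (Fin n → Bool) → X) :
    (Fin (n + k) → Bool) → X :=
  fun v =>
    if ∀ j : Fin k, v (Fin.natAdd n j) = true
    then q1 (fun i => v (Fin.castAdd k i))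
    else q0 (fun i => v (Fin.castAdd k i))


section Aux

variable {G : Type*} [Group G]

/-- The generator set of `hkCubes`. -/
def genSet (Gf : ℕ → Subgroup G) (n : ℕ) : Set ((Fin n → Bool) → G) :=
  { f | ∃ (c : ℕ) (F : Set (Fin n → Bool)) (g : G),
    IsFaceOfCodim F c ∧ g ∈ Gf c ∧ f = faceEl F g }

lemma hkCubes_eq (Gf : ℕ → Subgroup G) (n : ℕ) :
    hkCubes Gf n = Subgroup.closure (genSet Gf n) := rfl

lemma filt_antitone {Gf : ℕ → Subgroup G} (h : ∀ i, Gf (i + 1) ≤ Gf i) :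
    ∀ {i j : ℕ}, i ≤ j → Gf j ≤ Gf i := by
  intro i j hij
  induction hij with
  | refl => exact le_rfl
  | step _ ih => exact le_trans (h _) ih

lemma faceEl_empty {n : ℕ} (g : G) : faceEl (∅ : Set (Fin n → Bool)) g = 1 := by
  funext v; simp [faceEl]

lemma faceEl_inv {n : ℕ} (F : Set (Fin n → Bool)) (g : G) :
    (faceEl F g)⁻¹ = faceEl F g⁻¹ := by
  funext v; by_cases h : v ∈ F <;> simp [faceEl, h]

lemma faceEl_comp {m n : ℕ} (F : Set (Fin n → Bool)) (g : G)
    (e : (Fin m → Bool) → (Fin n → Bool)) :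
    (faceEl F g) ∘ e = faceEl (e ⁻¹' F) g := by
  funext v; by_cases h : e v ∈ F <;> simp [faceEl, h, Set.mem_preimage]

lemma gen_inv {Gf : ℕ → Subgroup G} {n : ℕ} {f : (Fin n → Bool) → G}
    (hf : f ∈ genSet Gf n) : f⁻¹ ∈ genSet Gf n := by
  obtain ⟨c, F, g, hF, hg, rfl⟩ := hf
  exact ⟨c, F, g⁻¹, hF, inv_mem hg, faceEl_inv F g⟩

lemma face_inter {n : ℕ} {F F' : Set (Fin n → Bool)} {c c' : ℕ}
    (h : IsFaceOfCodim F c) (h' : IsFaceOfCodim F' c') :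
    F ∩ F' = ∅ ∨ ∃ c'' ≤ c + c', IsFaceOfCodim (F ∩ F') c'' := by
  classical
  obtain ⟨I, x, hI, rfl⟩ := h
  obtain ⟨I', x', hI', rfl⟩ := h'
  by_cases hcomp : ∀ i ∈ I, i ∈ I' → x i = x' i
  · right
    refine ⟨(I ∪ I').card, ?_, I ∪ I', fun i => if i ∈ I then x i else x' i, rfl, ?_⟩
    · calc (I ∪ I').card ≤ I.card + I'.card := Finset.card_union_le _ _
        _ = c + c' := by rw [hI, hI']
    · ext v
      simp only [Set.mem_inter_iff, Set.mem_setOf_eq, Finset.mem_union]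
      constructor
      · rintro ⟨h1, h2⟩ i hi
        by_cases hiI : i ∈ I
        · simpa [hiI] using h1 i hiI
        · rcases hi with hi | hi
          · exact absurd hi hiI
          · simpa [hiI] using h2 i hi
      · intro h
        constructor
        · intro i hi
          have := h i (Or.inl hi); simpa [hi] using this
        · intro i hi
          by_cases hiI : i ∈ I
          · rw [← hcomp i hiI hi]
            have := h i (Or.inl hiI); simpa [hiI] using this
          · have := h i (Or.inr hi); simpa [hiI] using this
  · left
    push_neg at hcomp
    obtain ⟨i, hiI, hiI', hne⟩ := hcomp
    ext v
    simp only [Set.mem_inter_iff, Set.mem_setOf_eq, Set.mem_empty_iff_false, iff_false, not_and]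
    intro h1 h2
    exact hne ((h1 i hiI).symm.trans (h2 i hiI'))

lemma faceEl_conj {n : ℕ} (F F' : Set (Fin n → Bool)) (h g : G) :
    faceEl F h * faceEl F' g * (faceEl F h)⁻¹ =
      faceEl F' g * faceEl (F' ∩ F) (g⁻¹ * (h * (g * h⁻¹))) := by
  funext v
  by_cases hF : v ∈ F <;> by_cases hF' : v ∈ F' <;>
    simp [faceEl, hF, hF', Set.mem_inter_iff, mul_assoc]

/-- Precomposition as a group homomorphism. -/
def restrHom {X Y : Type*} (e : Y → X) : (X → G) →* (Y → G) where
  toFun f := f ∘ e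
  map_one' := rfl
  map_mul' _ _ := rfl

lemma card_preimage_succAbove_le {n : ℕ} (I : Finset (Fin (n + 1))) (j : Fin (n + 1)) :
    (I.preimage j.succAbove Fin.succAbove_right_injective.injOn).card ≤ I.card :=
  Finset.card_le_card_of_injOn j.succAbove
    (fun k hk => Finset.mem_preimage.mp hk)
    (Fin.succAbove_right_injective.injOn)

lemma card_preimage_succAbove_lt {n : ℕ} (I : Finset (Fin (n + 1))) (j : Fin (n + 1))
    (hj : j ∈ I) :
    (I.preimage j.succAbove Fin.succAbove_right_injective.injOn).card + 1 ≤ I.card := by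
  have h1 : (I.preimage j.succAbove Fin.succAbove_right_injective.injOn).card
      ≤ (I.erase j).card := by
    refine Finset.card_le_card_of_injOn j.succAbove (fun k hk => ?_)
      (Fin.succAbove_right_injective.injOn)
    exact Finset.mem_erase.mpr ⟨Fin.succAbove_ne j k, Finset.mem_preimage.mp hk⟩
  have h2 : (I.erase j).card = I.card - 1 := Finset.card_erase_of_mem hj
  have h3 : 1 ≤ I.card := Finset.card_pos.mpr ⟨j, hj⟩
  omega

lemma preimage_insertNth_face_empty {n : ℕ} (I : Finset (Fin (n + 1))) (x : Fin (n + 1) → Bool)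
    (j : Fin (n + 1)) (b : Bool) (hj : j ∈ I) (hx : x j ≠ b) :
    (fun w => j.insertNth b w) ⁻¹' {v | ∀ i ∈ I, v i = x i} = ∅ := by
  ext w
  simp only [Set.mem_preimage, Set.mem_setOf_eq, Set.mem_empty_iff_false, iff_false, not_forall]
  refine ⟨j, hj, fun heq => ?_⟩
  rw [Fin.insertNth_apply_same] at heq
  exact hx heq.symm

lemma preimage_insertNth_face {n : ℕ} (I : Finset (Fin (n + 1))) (x : Fin (n + 1) → Bool)
    (j : Fin (n + 1)) (b : Bool) (hcond : j ∈ I → x j = b) :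
    (fun w => j.insertNth b w) ⁻¹' {v | ∀ i ∈ I, v i = x i} =
      {w | ∀ k ∈ I.preimage j.succAbove Fin.succAbove_right_injective.injOn,
        w k = x (j.succAbove k)} := by
  ext w
  simp only [Set.mem_preimage, Set.mem_setOf_eq]
  constructor
  · intro h k hk
    have := h (j.succAbove k) (Finset.mem_preimage.mp hk)
    rwa [Fin.insertNth_apply_succAbove] at this
  · intro h i hi
    rcases eq_or_ne i j with rfl | hij
    · rw [Fin.insertNth_apply_same, hcond hi]
    · obtain ⟨k, rfl⟩ := Fin.exists_succAbove_eq hij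
      rw [Fin.insertNth_apply_succAbove]
      exact h k (Finset.mem_preimage.mpr hi)

lemma restr_mem {Gf : ℕ → Subgroup G} (hdec : ∀ i, Gf (i + 1) ≤ Gf i) {n : ℕ}
    (j : Fin (n + 1)) (b : Bool) {r : (Fin (n + 1) → Bool) → G}
    (hr : r ∈ hkCubes Gf (n + 1)) :
    (r ∘ fun w => j.insertNth b w) ∈ hkCubes Gf n := by
  rw [hkCubes_eq] at hr
  refine Subgroup.closure_induction (p := fun (r : (Fin (n + 1) → Bool) → G) _ =>
    (r ∘ fun w => (j.insertNth b w : Fin (n + 1) → Bool)) ∈ hkCubes Gf n)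
    ?_ (one_mem _) (fun a c _ _ ha hc => mul_mem ha hc) (fun a _ ha => inv_mem ha) hr
  intro f hf
  obtain ⟨c, F, g, hF, hg, rfl⟩ := hf
  show (faceEl F g ∘ fun w => j.insertNth b w) ∈ hkCubes Gf n
  rw [faceEl_comp]
  obtain ⟨I, x, hI, rfl⟩ := hF
  by_cases hcond : j ∈ I → x j = b
  · rw [preimage_insertNth_face I x j b hcond]
    refine Subgroup.subset_closure
      ⟨(I.preimage j.succAbove Fin.succAbove_right_injective.injOn).card,
        {w | ∀ k ∈ I.preimage j.succAbove Fin.succAbove_right_injective.injOn,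
          w k = x (j.succAbove k)}, g,
        ⟨I.preimage j.succAbove Fin.succAbove_right_injective.injOn,
          fun k => x (j.succAbove k), rfl, rfl⟩, ?_, rfl⟩
    exact filt_antitone hdec (hI ▸ card_preimage_succAbove_le I j) hg
  · push_neg at hcond
    rw [preimage_insertNth_face_empty I x j b hcond.1 hcond.2, faceEl_empty]
    exact one_mem _

lemma conj_gen_mem {Gf : ℕ → Subgroup G} (hGf : IsGrpPrefiltration Gf) {n : ℕ}
    {f x : (Fin n → Bool) → G} (hf : f ∈ genSet Gf n)
    (hx : x ∈ hkCubes (fun k => Gf (k + 1)) n) :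
    f * x * f⁻¹ ∈ hkCubes (fun k => Gf (k + 1)) n := by
  rw [hkCubes_eq] at hx
  refine Subgroup.closure_induction
    (p := fun x _ => f * x * f⁻¹ ∈ hkCubes (fun k => Gf (k + 1)) n) ?_ (by simpa using one_mem _)
    (fun a c _ _ ha hc => by
      show f * (a * c) * f⁻¹ ∈ hkCubes (fun k => Gf (k + 1)) n
      have h : f * (a * c) * f⁻¹ = (f * a * f⁻¹) * (f * c * f⁻¹) := by group
      rw [h]; exact mul_mem ha hc)
    (fun a _ ha => by
      show f * a⁻¹ * f⁻¹ ∈ hkCubes (fun k => Gf (k + 1)) n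
      have h : f * a⁻¹ * f⁻¹ = (f * a * f⁻¹)⁻¹ := by group
      rw [h]; exact inv_mem ha) hx
  intro y hy
  obtain ⟨c, F, h, hF, hh, rfl⟩ := hf
  obtain ⟨c', F', g, hF', hg, rfl⟩ := hy
  show faceEl F h * faceEl F' g * (faceEl F h)⁻¹ ∈ hkCubes (fun k => Gf (k + 1)) n
  rw [faceEl_conj]
  refine mul_mem (Subgroup.subset_closure ⟨c', F', g, hF', hg, rfl⟩) ?_
  have hk : g⁻¹ * (h * (g * h⁻¹)) ∈ Gf (c' + 1 + c) := by
    have := hGf.2 (c' + 1) c g hg h⁻¹ (inv_mem hh)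
    rw [inv_inv] at this
    have heq : g⁻¹ * h * g * h⁻¹ = g⁻¹ * (h * (g * h⁻¹)) := by group
    rwa [heq] at this
  rcases face_inter hF' hF with hemp | ⟨c'', hle, hface⟩
  · rw [hemp, faceEl_empty]; exact one_mem _
  · refine Subgroup.subset_closure ⟨c'', _, _, hface, ?_, rfl⟩
    exact filt_antitone hGf.1 (by omega : c'' + 1 ≤ c' + 1 + c) hk

lemma cubes_le_normalizer {Gf : ℕ → Subgroup G} (hGf : IsGrpPrefiltration Gf) (n : ℕ) :
    hkCubes Gf n ≤ Subgroup.normalizer ((hkCubes (fun k => Gf (k + 1)) n : Set ((Fin n → Bool) → G))) := by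
  rw [hkCubes_eq]
  refine (Subgroup.closure_le _).mpr ?_
  intro f hf
  rw [SetLike.mem_coe, Subgroup.mem_normalizer_iff]
  intro x
  constructor
  · intro hx; exact conj_gen_mem hGf hf hx
  · intro hx
    have h2 := conj_gen_mem hGf (gen_inv hf) hx
    have heq : f⁻¹ * (f * x * f⁻¹) * f⁻¹⁻¹ = x := by group
    rwa [heq] at h2

lemma values_mem {Gf : ℕ → Subgroup G} (hdec : ∀ i, Gf (i + 1) ≤ Gf i) {n : ℕ}
    {r : (Fin n → Bool) → G} (hr : r ∈ hkCubes Gf n) (v : Fin n → Bool) : r v ∈ Gf 0 := by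
  rw [hkCubes_eq] at hr
  refine Subgroup.closure_induction (p := fun r _ => r v ∈ Gf 0) ?_ (one_mem _)
    (fun a c _ _ ha hc => mul_mem ha hc) (fun a _ ha => inv_mem ha) hr
  intro f hf
  obtain ⟨c, F, g, _, hg, rfl⟩ := hf
  show faceEl F g v ∈ Gf 0
  by_cases h : v ∈ F
  · simpa [faceEl, h] using filt_antitone hdec (Nat.zero_le c) hg
  · simpa [faceEl, h] using one_mem (Gf 0)

lemma insertNth_last_true_top {m : ℕ} :
    (Fin.last m).insertNth true (fun _ => true) = (fun _ => true) := by
  funext i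
  rcases eq_or_ne i (Fin.last m) with rfl | hij
  · rw [Fin.insertNth_apply_same]
  · obtain ⟨k, rfl⟩ := Fin.exists_succAbove_eq hij
    rw [Fin.insertNth_apply_succAbove]

lemma cube_succ_struct {Gf : ℕ → Subgroup G} (hGf : IsGrpPrefiltration Gf) {m : ℕ}
    {r : (Fin (m + 1) → Bool) → G} (hr : r ∈ hkCubes Gf (m + 1)) :
    (r ∘ fun w => (Fin.last m).insertNth false w) ∈ hkCubes Gf m ∧
      (r ∘ fun w => (Fin.last m).insertNth false w)⁻¹ *
        (r ∘ fun w => (Fin.last m).insertNth true w) ∈ hkCubes (fun k => Gf (k + 1)) m := by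
  have hnorm : ∀ b ∈ hkCubes Gf m, ∀ x ∈ hkCubes (fun k => Gf (k + 1)) m,
      b⁻¹ * x * b ∈ hkCubes (fun k => Gf (k + 1)) m := by
    intro b hb x hx
    have hbn : b⁻¹ ∈ Subgroup.normalizer ((hkCubes (fun k => Gf (k + 1)) m : Set ((Fin m → Bool) → G))) :=
      inv_mem (cubes_le_normalizer hGf m hb)
    have := (Subgroup.mem_normalizer_iff.mp hbn x).mp hx
    rwa [inv_inv] at this
  rw [hkCubes_eq] at hr
  refine Subgroup.closure_induction
    (p := fun (cc : (Fin (m + 1) → Bool) → G) _ =>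
      (cc ∘ fun w => ((Fin.last m).insertNth false w : Fin (m + 1) → Bool)) ∈ hkCubes Gf m ∧
      (cc ∘ fun w => ((Fin.last m).insertNth false w : Fin (m + 1) → Bool))⁻¹ *
        (cc ∘ fun w => ((Fin.last m).insertNth true w : Fin (m + 1) → Bool))
          ∈ hkCubes (fun k => Gf (k + 1)) m)
    ?_ ?_ ?_ ?_ hr
  · -- generators
    intro f hf
    obtain ⟨c, F, g, hF, hg, rfl⟩ := hf
    obtain ⟨I, x, hI, rfl⟩ := hF
    show (faceEl {v | ∀ i ∈ I, v i = x i} g ∘ fun w => (Fin.last m).insertNth false w)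
        ∈ hkCubes Gf m ∧ _
    rw [faceEl_comp, faceEl_comp]
    by_cases hjI : Fin.last m ∈ I
    · rcases Bool.eq_false_or_eq_true (x (Fin.last m)) with hxl | hxl
      · -- x last = true : lower preimage empty
        have h0 : (fun w => (Fin.last m).insertNth false w) ⁻¹' {v | ∀ i ∈ I, v i = x i} = ∅ :=
          preimage_insertNth_face_empty I x _ false hjI (by simp [hxl])
        have h1 : (fun w => (Fin.last m).insertNth true w) ⁻¹' {v | ∀ i ∈ I, v i = x i}
            = {w | ∀ k ∈ I.preimage (Fin.last m).succAbove
                Fin.succAbove_right_injective.injOn,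
                w k = x ((Fin.last m).succAbove k)} :=
          preimage_insertNth_face I x _ true (fun _ => hxl)
        rw [h0, h1, faceEl_empty]
        refine ⟨one_mem _, ?_⟩
        rw [inv_one, one_mul]
        refine Subgroup.subset_closure
          ⟨(I.preimage (Fin.last m).succAbove Fin.succAbove_right_injective.injOn).card,
            _, g, ⟨I.preimage (Fin.last m).succAbove Fin.succAbove_right_injective.injOn,
              fun k => x ((Fin.last m).succAbove k), rfl, rfl⟩, ?_, rfl⟩
        exact filt_antitone hGf.1 (hI ▸ card_preimage_succAbove_lt I _ hjI) hg
      · -- x last = false : upper preimage empty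
        have h1 : (fun w => (Fin.last m).insertNth true w) ⁻¹' {v | ∀ i ∈ I, v i = x i} = ∅ :=
          preimage_insertNth_face_empty I x _ true hjI (by simp [hxl])
        have h0 : (fun w => (Fin.last m).insertNth false w) ⁻¹' {v | ∀ i ∈ I, v i = x i}
            = {w | ∀ k ∈ I.preimage (Fin.last m).succAbove
                Fin.succAbove_right_injective.injOn,
                w k = x ((Fin.last m).succAbove k)} :=
          preimage_insertNth_face I x _ false (fun _ => hxl)
        rw [h0, h1, faceEl_empty]
        constructor
        · refine Subgroup.subset_closure
            ⟨(I.preimage (Fin.last m).succAbove Fin.succAbove_right_injective.injOn).card,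
              _, g, ⟨I.preimage (Fin.last m).succAbove Fin.succAbove_right_injective.injOn,
                fun k => x ((Fin.last m).succAbove k), rfl, rfl⟩, ?_, rfl⟩
          exact filt_antitone hGf.1 (hI ▸ card_preimage_succAbove_le I _) hg
        · rw [mul_one, faceEl_inv]
          refine Subgroup.subset_closure
            ⟨(I.preimage (Fin.last m).succAbove Fin.succAbove_right_injective.injOn).card,
              _, g⁻¹, ⟨I.preimage (Fin.last m).succAbove Fin.succAbove_right_injective.injOn,
                fun k => x ((Fin.last m).succAbove k), rfl, rfl⟩, ?_, rfl⟩
          exact filt_antitone hGf.1 (hI ▸ card_preimage_succAbove_lt I _ hjI) (inv_mem hg)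
    · -- last ∉ I : the two preimages agree
      have h0 : (fun w => (Fin.last m).insertNth false w) ⁻¹' {v | ∀ i ∈ I, v i = x i}
          = {w | ∀ k ∈ I.preimage (Fin.last m).succAbove
              Fin.succAbove_right_injective.injOn,
              w k = x ((Fin.last m).succAbove k)} :=
        preimage_insertNth_face I x _ false (fun h => absurd h hjI)
      have h1 : (fun w => (Fin.last m).insertNth true w) ⁻¹' {v | ∀ i ∈ I, v i = x i}
          = {w | ∀ k ∈ I.preimage (Fin.last m).succAbove
              Fin.succAbove_right_injective.injOn,
              w k = x ((Fin.last m).succAbove k)} :=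
        preimage_insertNth_face I x _ true (fun h => absurd h hjI)
      rw [h0, h1, inv_mul_cancel]
      constructor
      · refine Subgroup.subset_closure
          ⟨(I.preimage (Fin.last m).succAbove Fin.succAbove_right_injective.injOn).card,
            _, g, ⟨I.preimage (Fin.last m).succAbove Fin.succAbove_right_injective.injOn,
              fun k => x ((Fin.last m).succAbove k), rfl, rfl⟩, ?_, rfl⟩
        exact filt_antitone hGf.1 (hI ▸ card_preimage_succAbove_le I _) hg
      · exact one_mem _
  · -- one
    refine ⟨one_mem _, ?_⟩
    show ((1 : (Fin m → Bool) → G))⁻¹ * (1 : (Fin m → Bool) → G)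
        ∈ hkCubes (fun k => Gf (k + 1)) m
    rw [inv_one, one_mul]
    exact one_mem _
  · -- mul
    rintro a c _ _ ⟨ha0, ha1⟩ ⟨hc0, hc1⟩
    refine ⟨mul_mem ha0 hc0, ?_⟩
    show ((a ∘ fun w => (Fin.last m).insertNth false w) *
        (c ∘ fun w => (Fin.last m).insertNth false w))⁻¹ *
        ((a ∘ fun w => (Fin.last m).insertNth true w) *
        (c ∘ fun w => (Fin.last m).insertNth true w)) ∈ hkCubes (fun k => Gf (k + 1)) m
    have h : ((a ∘ fun w => (Fin.last m).insertNth false w) *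
        (c ∘ fun w => (Fin.last m).insertNth false w))⁻¹ *
        ((a ∘ fun w => (Fin.last m).insertNth true w) *
        (c ∘ fun w => (Fin.last m).insertNth true w))
        = ((c ∘ fun w => (Fin.last m).insertNth false w)⁻¹ *
            ((a ∘ fun w => (Fin.last m).insertNth false w)⁻¹ *
             (a ∘ fun w => (Fin.last m).insertNth true w)) *
            (c ∘ fun w => (Fin.last m).insertNth false w)) *
          ((c ∘ fun w => (Fin.last m).insertNth false w)⁻¹ *
           (c ∘ fun w => (Fin.last m).insertNth true w)) := by group
    rw [h]
    exact mul_mem (hnorm _ hc0 _ ha1) hc1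
  · -- inv
    rintro a _ ⟨ha0, ha1⟩
    refine ⟨inv_mem ha0, ?_⟩
    show ((a ∘ fun w => (Fin.last m).insertNth false w)⁻¹)⁻¹ *
        (a ∘ fun w => (Fin.last m).insertNth true w)⁻¹ ∈ hkCubes (fun k => Gf (k + 1)) m
    have h : ((a ∘ fun w => (Fin.last m).insertNth false w)⁻¹)⁻¹ *
        (a ∘ fun w => (Fin.last m).insertNth true w)⁻¹
        = ((a ∘ fun w => (Fin.last m).insertNth false w)⁻¹)⁻¹ *
          ((a ∘ fun w => (Fin.last m).insertNth false w)⁻¹ *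
           (a ∘ fun w => (Fin.last m).insertNth true w))⁻¹ *
          (a ∘ fun w => (Fin.last m).insertNth false w)⁻¹ := by group
    rw [h]
    exact hnorm _ (inv_mem ha0) _ (inv_mem ha1)

lemma key_lemma : ∀ (m : ℕ) (Gf : ℕ → Subgroup G), IsGrpPrefiltration Gf →
    ∀ r ∈ hkCubes Gf m, (∀ v, v ≠ (fun _ => true) → r v = 1) →
    r (fun _ => true) ∈ Gf m := by
  intro m
  induction m with
  | zero => intro Gf hGf r hr _; exact values_mem hGf.1 hr _
  | succ m ih =>
    intro Gf hGf r hr hsupp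
    have hGp' : IsGrpPrefiltration (fun k => Gf (k + 1)) := by
      constructor
      · intro i; exact hGf.1 (i + 1)
      · intro i j x hx y hy
        have h1 := hGf.2 (i + 1) (j + 1) x hx y hy
        have h2 : Gf (i + 1 + (j + 1)) ≤ Gf (i + j + 1) :=
          filt_antitone hGf.1 (by omega)
        exact h2 h1
    obtain ⟨hr0, hr1⟩ := cube_succ_struct hGf hr
    have hρ0r : (r ∘ fun w => (Fin.last m).insertNth false w) = 1 := by
      funext w
      refine hsupp ((Fin.last m).insertNth false w) ?_
      intro hc
      have := congrFun hc (Fin.last m)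
      simp only [Fin.insertNth_apply_same] at this
      exact Bool.noConfusion this
    rw [hρ0r, inv_one, one_mul] at hr1
    have hsupp1 : ∀ w, w ≠ (fun _ => true) →
        (r ∘ fun w => (Fin.last m).insertNth true w) w = 1 := by
      intro w hw
      refine hsupp ((Fin.last m).insertNth true w) ?_
      intro hc
      apply hw
      funext k
      have := congrFun hc ((Fin.last m).succAbove k)
      simpa only [Fin.insertNth_apply_succAbove] using this
    have hmem := ih (fun k => Gf (k + 1)) hGp'
      (r ∘ fun w => (Fin.last m).insertNth true w) hr1 hsupp1
    have heq : (r ∘ fun w => (Fin.last m).insertNth true w) (fun _ => true)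
        = r (fun _ => true) := by
      show r ((Fin.last m).insertNth true (fun _ => true)) = r (fun _ => true)
      rw [insertNth_last_true_top]
    rw [heq] at hmem
    exact hmem

lemma weight_insertNth_false {n : ℕ} (j : Fin (n + 1)) (v : Fin n → Bool) :
    weight (j.insertNth false v) = weight v := by
  classical
  rw [weight, weight]
  have hset : (Finset.univ.filter fun i : Fin (n + 1) =>
      (j.insertNth false v : Fin (n + 1) → Bool) i = true)
      = (Finset.univ.filter fun k : Fin n => v k = true).image j.succAbove := by
    ext i
    simp only [Finset.mem_filter, Finset.mem_univ, true_and, Finset.mem_image]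
    constructor
    · intro hi
      have hij : i ≠ j := by
        rintro rfl
        rw [Fin.insertNth_apply_same] at hi
        exact Bool.noConfusion hi
      obtain ⟨k, rfl⟩ := Fin.exists_succAbove_eq hij
      refine ⟨k, ?_, rfl⟩
      rwa [Fin.insertNth_apply_succAbove] at hi
    · rintro ⟨k, hk, rfl⟩
      rwa [Fin.insertNth_apply_succAbove]
  rw [hset, Finset.card_image_of_injective _ Fin.succAbove_right_injective]

lemma weight_top {n : ℕ} : weight (fun _ : Fin n => true) = n := by
  simp [weight]

end Aux

theorem stmt4 {G : Type*} [Group G] (Gf : ℕ → Subgroup G) (hGf : IsGrpPrefiltration Gf)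
    {d : ℕ} (hdeg : Gf (d + 1) = ⊥) {n : ℕ} (q q' : (Fin n → Bool) → G)
    (hq : q ∈ hkCubes Gf n) (hq' : q' ∈ hkCubes Gf n)
    (hagree : ∀ v : Fin n → Bool, weight v ≤ d → q v = q' v) :
    q = q' := by
  induction n with
  | zero =>
    funext v
    exact hagree v (by simp [weight])
  | succ n ih =>
    have hface : ∀ j : Fin (n + 1), lowerFaceRestr q j = lowerFaceRestr q' j := by
      intro j
      refine ih _ _ (restr_mem hGf.1 j false hq) (restr_mem hGf.1 j false hq') ?_
      intro v hv
      exact hagree _ (by rwa [weight_insertNth_false])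
    have hne : ∀ v : Fin (n + 1) → Bool, v ≠ (fun _ => true) → q v = q' v := by
      intro v hv
      have hex : ∃ j, v j = false := by
        by_contra h
        push_neg at h
        exact hv (funext fun j => by
          rcases Bool.eq_false_or_eq_true (v j) with h' | h'
          · exact h'
          · exact absurd h' (h j))
      obtain ⟨j, hj⟩ := hex
      have hveq : j.insertNth false (fun k => v (j.succAbove k)) = v := by
        funext i
        rcases eq_or_ne i j with rfl | hij
        · rw [Fin.insertNth_apply_same, hj]
        · obtain ⟨k, rfl⟩ := Fin.exists_succAbove_eq hij
          rw [Fin.insertNth_apply_succAbove]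
      rw [← hveq]
      exact congrFun (hface j) _
    funext v
    by_cases hv : v = fun _ => true
    · subst hv
      by_cases htop : weight (fun _ : Fin (n + 1) => true) ≤ d
      · exact hagree _ htop
      · have hr : q * q'⁻¹ ∈ hkCubes Gf (n + 1) := mul_mem hq (inv_mem hq')
        have hsupp : ∀ w, w ≠ (fun _ => true) → (q * q'⁻¹) w = 1 := by
          intro w hw
          show q w * (q' w)⁻¹ = 1
          rw [hne w hw, mul_inv_cancel]
        have hmem := key_lemma (n + 1) Gf hGf _ hr hsupp
        have hle : Gf (n + 1) ≤ Gf (d + 1) := by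
          refine filt_antitone hGf.1 ?_
          rw [weight_top] at htop
          omega
        rw [hdeg] at hle
        have h1 : (q * q'⁻¹) (fun _ => true) = 1 := Subgroup.mem_bot.mp (hle hmem)
        have h2 : q (fun _ => true) * (q' (fun _ => true))⁻¹ = 1 := h1
        exact mul_inv_eq_one.mp h2
    · exact hne v hv
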